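/- (Beauzamy-type bound) If P(z) = Σ_{|α|=k} c_α z^α is a homogeneous polynomial of degree k and f_m is a homogeneous polynomial of degree m on ℂ^d, then ‖P f_m‖_a ≤ ‖f_m‖_a (1+m)^{k/2} Σ_{|α|=k} |c_α| sqrt(α!). -/

import Mathlib

open MvPolynomial Finset

/-- Multi-index factorial `α! = α₁! ⋯ α_d!`. -/
def mfact {d : ℕ} (α : Fin d →₀ ℕ) : ℕ := ∏ i, (α i).factorial

/-- The apolar (Fischer/Bombieri) inner product `⟨P,Q⟩_a = Σ_α α! c_α conj(d_α)`. -/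
noncomputable def apolar {d : ℕ} (P Q : MvPolynomial (Fin d) ℂ) : ℂ :=
  ∑ α ∈ P.support ∪ Q.support, (mfact α : ℂ) * P.coeff α * (starRingEnd ℂ) (Q.coeff α)

/-- The squared apolar norm. -/
noncomputable def apolarNormSq {d : ℕ} (P : MvPolynomial (Fin d) ℂ) : ℝ :=
  ∑ α ∈ P.support, (mfact α : ℝ) * ‖P.coeff α‖ ^ 2

/-- The apolar norm. -/
noncomputable def apolarNorm {d : ℕ} (P : MvPolynomial (Fin d) ℂ) : ℝ :=
  Real.sqrt (apolarNormSq P)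

/-- The mixed partial derivative `D^α = ∂^{α₁}_1 ⋯ ∂^{α_d}_d` as a linear endomorphism. -/
noncomputable def Dmulti {d : ℕ} (α : Fin d →₀ ℕ) :
    Module.End ℂ (MvPolynomial (Fin d) ℂ) :=
  (List.ofFn fun i : Fin d =>
    ((MvPolynomial.pderiv i).toLinearMap : Module.End ℂ (MvPolynomial (Fin d) ℂ)) ^ α i).prod

/-- The differential operator `Q*(D)`: conjugate the coefficients of `Q` and replace
each variable by the corresponding partial derivative. -/
noncomputable def Dop {d : ℕ} (Q : MvPolynomial (Fin d) ℂ) :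
    Module.End ℂ (MvPolynomial (Fin d) ℂ) :=
  ∑ α ∈ Q.support, (starRingEnd ℂ) (Q.coeff α) • Dmulti α

lemma apolarNormSq_nonneg {d : ℕ} (P : MvPolynomial (Fin d) ℂ) : 0 ≤ apolarNormSq P :=
  Finset.sum_nonneg fun _ _ => by positivity

lemma apolarNorm_nonneg {d : ℕ} (P : MvPolynomial (Fin d) ℂ) : 0 ≤ apolarNorm P :=
  Real.sqrt_nonneg _

lemma apolarNormSq_eq_sum {d : ℕ} (P : MvPolynomial (Fin d) ℂ) {S : Finset (Fin d →₀ ℕ)}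
    (hS : P.support ⊆ S) :
    apolarNormSq P = ∑ γ ∈ S, (mfact γ : ℝ) * ‖P.coeff γ‖ ^ 2 := by
  refine Finset.sum_subset hS fun γ _ hγ => ?_
  rw [MvPolynomial.notMem_support_iff.mp hγ]
  simp

lemma apolarNorm_zero {d : ℕ} : apolarNorm (0 : MvPolynomial (Fin d) ℂ) = 0 := by
  simp [apolarNorm, apolarNormSq]

lemma apolarNorm_smul {d : ℕ} (c : ℂ) (Q : MvPolynomial (Fin d) ℂ) :
    apolarNorm (c • Q) = ‖c‖ * apolarNorm Q := by
  have hsupp : (c • Q).support ⊆ Q.support := by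
    intro γ hγ
    rw [MvPolynomial.mem_support_iff] at hγ ⊢
    intro h
    simp [MvPolynomial.coeff_smul, h] at hγ
  rw [apolarNorm, apolarNormSq_eq_sum (c • Q) hsupp]
  have : ∑ γ ∈ Q.support, (mfact γ : ℝ) * ‖(c • Q).coeff γ‖ ^ 2
      = ‖c‖ ^ 2 * apolarNormSq Q := by
    rw [apolarNormSq, Finset.mul_sum]
    refine Finset.sum_congr rfl fun γ _ => ?_
    rw [MvPolynomial.coeff_smul, smul_eq_mul, norm_mul]
    ring
  rw [this, Real.sqrt_mul (by positivity), Real.sqrt_sq (norm_nonneg c)]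
  rfl

lemma apolarNorm_add_le {d : ℕ} (Q R : MvPolynomial (Fin d) ℂ) :
    apolarNorm (Q + R) ≤ apolarNorm Q + apolarNorm R := by
  classical
  set S := Q.support ∪ R.support with hS
  have hQR : (Q + R).support ⊆ S := MvPolynomial.support_add
  set a : (Fin d →₀ ℕ) → ℝ := fun γ => Real.sqrt (mfact γ) * ‖Q.coeff γ‖
  set b : (Fin d →₀ ℕ) → ℝ := fun γ => Real.sqrt (mfact γ) * ‖R.coeff γ‖
  have ha : ∀ γ, 0 ≤ a γ := fun γ => by positivity
  have hb : ∀ γ, 0 ≤ b γ := fun γ => by positivity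
  have hA : apolarNormSq Q = ∑ γ ∈ S, a γ ^ 2 := by
    rw [apolarNormSq_eq_sum Q subset_union_left]
    refine Finset.sum_congr rfl fun γ _ => ?_
    rw [mul_pow, Real.sq_sqrt (by positivity)]
  have hB : apolarNormSq R = ∑ γ ∈ S, b γ ^ 2 := by
    rw [apolarNormSq_eq_sum R subset_union_right]
    refine Finset.sum_congr rfl fun γ _ => ?_
    rw [mul_pow, Real.sq_sqrt (by positivity)]
  have hCS : ∑ γ ∈ S, a γ * b γ ≤ Real.sqrt (apolarNormSq Q) * Real.sqrt (apolarNormSq R) := by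
    rw [← Real.sqrt_mul (apolarNormSq_nonneg Q), hA, hB]
    rw [Real.le_sqrt (Finset.sum_nonneg fun γ _ => mul_nonneg (ha γ) (hb γ))]
    · exact Finset.sum_mul_sq_le_sq_mul_sq S a b
    · exact mul_nonneg (hA ▸ apolarNormSq_nonneg Q) (hB ▸ apolarNormSq_nonneg R)
  have key : apolarNormSq (Q + R) ≤ (apolarNorm Q + apolarNorm R) ^ 2 := by
    have h1 : apolarNormSq (Q + R) ≤ ∑ γ ∈ S, (a γ + b γ) ^ 2 := by
      rw [apolarNormSq_eq_sum (Q + R) hQR]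
      refine Finset.sum_le_sum fun γ _ => ?_
      have habs : ‖(Q + R).coeff γ‖ ≤ ‖Q.coeff γ‖ + ‖R.coeff γ‖ := by
        rw [MvPolynomial.coeff_add]; exact norm_add_le _ _
      have h2 : (mfact γ : ℝ) * ‖(Q + R).coeff γ‖ ^ 2
          ≤ (mfact γ : ℝ) * (‖Q.coeff γ‖ + ‖R.coeff γ‖) ^ 2 := by
        refine mul_le_mul_of_nonneg_left ?_ (by positivity)
        exact pow_le_pow_left₀ (norm_nonneg _) habs 2
      refine h2.trans_eq ?_
      have : a γ + b γ = Real.sqrt (mfact γ) * (‖Q.coeff γ‖ + ‖R.coeff γ‖) := by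
        simp only [a, b]; ring
      rw [this, mul_pow, Real.sq_sqrt (by positivity)]
    refine h1.trans ?_
    have expand : ∑ γ ∈ S, (a γ + b γ) ^ 2
        = (∑ γ ∈ S, a γ ^ 2) + 2 * (∑ γ ∈ S, a γ * b γ) + ∑ γ ∈ S, b γ ^ 2 := by
      rw [Finset.mul_sum, ← Finset.sum_add_distrib, ← Finset.sum_add_distrib]
      refine Finset.sum_congr rfl fun γ _ => by ring
    rw [expand]
    have : (apolarNorm Q + apolarNorm R) ^ 2
        = apolarNormSq Q + 2 * (Real.sqrt (apolarNormSq Q) * Real.sqrt (apolarNormSq R)) + apolarNormSq R := by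
      rw [apolarNorm, apolarNorm]
      rw [add_sq, Real.sq_sqrt (apolarNormSq_nonneg Q), Real.sq_sqrt (apolarNormSq_nonneg R)]
      ring
    rw [this, ← hA, ← hB]
    have := hCS
    linarith
  rw [apolarNorm]
  calc Real.sqrt (apolarNormSq (Q + R)) ≤ Real.sqrt ((apolarNorm Q + apolarNorm R) ^ 2) :=
        Real.sqrt_le_sqrt key
    _ = apolarNorm Q + apolarNorm R :=
        Real.sqrt_sq (add_nonneg (apolarNorm_nonneg Q) (apolarNorm_nonneg R))

lemma apolarNorm_sum_le {d : ℕ} {ι : Type*} (s : Finset ι) (g : ι → MvPolynomial (Fin d) ℂ) :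
    apolarNorm (∑ i ∈ s, g i) ≤ ∑ i ∈ s, apolarNorm (g i) := by
  classical
  induction s using Finset.cons_induction with
  | empty => simp [apolarNorm_zero]
  | cons i s hi ih =>
    rw [Finset.sum_cons, Finset.sum_cons]
    exact (apolarNorm_add_le _ _).trans (by linarith)

lemma factorial_add_le (a b : ℕ) : (a + b).factorial ≤ a.factorial * b.factorial * (b + 1) ^ a := by
  induction a with
  | zero => simp
  | succ n ih =>
    have h1 : (n + 1 + b).factorial = (n + b + 1) * (n + b).factorial := by
      rw [show n + 1 + b = n + b + 1 by ring, Nat.factorial_succ]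
    rw [h1]
    calc (n + b + 1) * (n + b).factorial
        ≤ ((n + 1) * (b + 1)) * (n.factorial * b.factorial * (b + 1) ^ n) := by
          refine Nat.mul_le_mul ?_ ih
          nlinarith
      _ = (n + 1).factorial * b.factorial * (b + 1) ^ (n + 1) := by
          rw [Nat.factorial_succ, pow_succ]; ring

lemma mfact_add_le {d m : ℕ} (α β : Fin d →₀ ℕ) (hβ : ∑ i, β i = m) :
    mfact (α + β) ≤ mfact α * mfact β * (m + 1) ^ (∑ i, α i) := by
  have hβi : ∀ i, β i ≤ m := fun i => hβ ▸ Finset.single_le_sum (fun j _ => Nat.zero_le _) (mem_univ i)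
  calc mfact (α + β) = ∏ i, (α i + β i).factorial := by
        unfold mfact; exact Finset.prod_congr rfl fun i _ => by rw [Finsupp.add_apply]
    _ ≤ ∏ i, ((α i).factorial * (β i).factorial * (m + 1) ^ (α i)) := by
        refine Finset.prod_le_prod' fun i _ => ?_
        refine (factorial_add_le (α i) (β i)).trans ?_
        exact Nat.mul_le_mul_left _ (Nat.pow_le_pow_left (Nat.succ_le_succ (hβi i)) _)
    _ = mfact α * mfact β * (m + 1) ^ (∑ i, α i) := by
        rw [Finset.prod_mul_distrib, Finset.prod_mul_distrib, Finset.prod_pow_eq_pow_sum]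
        rfl

lemma degree_eq {d n : ℕ} {Q : MvPolynomial (Fin d) ℂ} (hQ : Q.IsHomogeneous n)
    {α : Fin d →₀ ℕ} (hα : α ∈ Q.support) : ∑ i, α i = n := by
  have := hQ (MvPolynomial.mem_support_iff.mp hα)
  rw [Finsupp.weight_apply] at this
  simp only [Pi.one_apply, smul_eq_mul, mul_one] at this
  rw [← this, Finsupp.sum_fintype]
  intro i; rfl

lemma monomial_bound {d k m : ℕ} (α : Fin d →₀ ℕ) (hα : ∑ i, α i = k)
    (f : MvPolynomial (Fin d) ℂ) (hf : f.IsHomogeneous m) :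
    apolarNormSq (monomial α 1 * f) ≤ (mfact α : ℝ) * (1 + m) ^ k * apolarNormSq f := by
  classical
  set S : Finset (Fin d →₀ ℕ) := f.support.map (addLeftEmbedding α) with hSdef
  have hsub : (monomial α (1:ℂ) * f).support ⊆ S := by
    intro γ hγ
    rw [MvPolynomial.mem_support_iff, MvPolynomial.coeff_monomial_mul'] at hγ
    by_cases hle : α ≤ γ
    · rw [if_pos hle, one_mul] at hγ
      rw [hSdef, Finset.mem_map]
      exact ⟨γ - α, MvPolynomial.mem_support_iff.mpr hγ, add_tsub_cancel_of_le hle⟩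
    · rw [if_neg hle] at hγ; exact absurd rfl hγ
  rw [apolarNormSq_eq_sum _ hsub, hSdef, Finset.sum_map]
  have hcoeff : ∀ β, (monomial α (1:ℂ) * f).coeff (addLeftEmbedding α β) = f.coeff β := by
    intro β
    show (monomial α (1:ℂ) * f).coeff (α + β) = f.coeff β
    rw [MvPolynomial.coeff_monomial_mul, one_mul]
  calc ∑ β ∈ f.support, (mfact (addLeftEmbedding α β) : ℝ) *
          ‖(monomial α (1:ℂ) * f).coeff (addLeftEmbedding α β)‖ ^ 2
      ≤ ∑ β ∈ f.support, ((mfact α : ℝ) * (1 + m) ^ k) *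
          ((mfact β : ℝ) * ‖f.coeff β‖ ^ 2) := by
        refine Finset.sum_le_sum fun β hβ => ?_
        rw [hcoeff β]
        have h1 : (mfact (addLeftEmbedding α β) : ℝ) ≤ (mfact α : ℝ) * (1 + m) ^ k * mfact β := by
          have := mfact_add_le α β (degree_eq hf hβ)
          rw [← hα]
          calc (mfact (addLeftEmbedding α β) : ℝ) = ((mfact (α + β) : ℕ) : ℝ) := rfl
            _ ≤ ((mfact α * mfact β * (m + 1) ^ (∑ i, α i) : ℕ) : ℝ) := Nat.cast_le.mpr this
            _ = (mfact α : ℝ) * (1 + m) ^ (∑ i, α i) * mfact β := by push_cast; ring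
        calc (mfact (addLeftEmbedding α β) : ℝ) * ‖f.coeff β‖ ^ 2
            ≤ ((mfact α : ℝ) * (1 + m) ^ k * mfact β) * ‖f.coeff β‖ ^ 2 :=
              mul_le_mul_of_nonneg_right h1 (by positivity)
          _ = ((mfact α : ℝ) * (1 + m) ^ k) * ((mfact β : ℝ) * ‖f.coeff β‖ ^ 2) := by ring
    _ = (mfact α : ℝ) * (1 + m) ^ k * apolarNormSq f := by
        rw [apolarNormSq, Finset.mul_sum]

/-- Beauzamy-type bound:
. -/
theorem stmt3 {d k m : ℕ} (P f : MvPolynomial (Fin d) ℂ)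
    (hP : P.IsHomogeneous k) (hf : f.IsHomogeneous m) :
    apolarNorm (P * f) ≤ apolarNorm f * ((1 + m : ℝ) ^ ((k : ℝ) / 2)) *
      ∑ α ∈ P.support, ‖P.coeff α‖ * Real.sqrt (mfact α) := by
  classical
  have hrw : P * f = ∑ α ∈ P.support, (P.coeff α) • (monomial α 1 * f) := by
    conv_lhs => rw [P.as_sum, Finset.sum_mul]
    refine Finset.sum_congr rfl fun α _ => ?_
    rw [← smul_mul_assoc, MvPolynomial.smul_monomial, smul_eq_mul, mul_one]
  have hpow : ((1 + m : ℝ)) ^ ((k : ℝ) / 2) = Real.sqrt ((1 + m) ^ k) := by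
    rw [Real.sqrt_eq_rpow, ← Real.rpow_natCast (1 + m : ℝ) k, ← Real.rpow_mul (by positivity)]
    ring_nf
  have hbound : ∀ α ∈ P.support, apolarNorm (monomial α (1:ℂ) * f)
      ≤ Real.sqrt (mfact α) * (Real.sqrt ((1 + m) ^ k) * apolarNorm f) := by
    intro α hα
    have h1 := monomial_bound α (degree_eq hP hα) f hf
    have h2 : apolarNorm (monomial α (1:ℂ) * f)
        ≤ Real.sqrt ((mfact α : ℝ) * (1 + m) ^ k * apolarNormSq f) := Real.sqrt_le_sqrt h1
    refine h2.trans_eq ?_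
    rw [Real.sqrt_mul (by positivity), Real.sqrt_mul (by positivity), apolarNorm, mul_assoc]
  calc apolarNorm (P * f) = apolarNorm (∑ α ∈ P.support, (P.coeff α) • (monomial α 1 * f)) := by
        rw [hrw]
    _ ≤ ∑ α ∈ P.support, apolarNorm ((P.coeff α) • (monomial α 1 * f)) :=
        apolarNorm_sum_le _ _
    _ = ∑ α ∈ P.support, ‖P.coeff α‖ * apolarNorm (monomial α 1 * f) :=
        Finset.sum_congr rfl fun α _ => apolarNorm_smul _ _
    _ ≤ ∑ α ∈ P.support, ‖P.coeff α‖ *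
          (Real.sqrt (mfact α) * (Real.sqrt ((1 + m) ^ k) * apolarNorm f)) := by
        refine Finset.sum_le_sum fun α hα => ?_
        exact mul_le_mul_of_nonneg_left (hbound α hα) (norm_nonneg _)
    _ = apolarNorm f * ((1 + m : ℝ) ^ ((k : ℝ) / 2)) *
          ∑ α ∈ P.support, ‖P.coeff α‖ * Real.sqrt (mfact α) := by
        rw [hpow, Finset.mul_sum]
        refine Finset.sum_congr rfl fun α _ => by ring
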